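/- arXiv:1802.00609 — 2 statements merged into one kernel-verified Lean document; each statement's English description precedes it below -/
import Mathlib

section
/- For every symmetric real matrix M and real matrices B and P of compatible sizes, the inequality M - Bᵀ P - Pᵀ B ⪰ 0 holds if and only if there exist (not necessarily symmetric) matrices Υ and Ξ such that the block matrix [[M - BᵀΥ - ΥᵀB, Υᵀ - Pᵀ - BᵀΞ], [Υ - P - ΞᵀB, Ξ + Ξᵀ]] is positive semidefinite. -/
open Matrix

theorem stmt0 {n : ℕ} (M B P : Matrix (Fin n) (Fin n) ℝ) (hM : M.IsSymm) :
    (M - Bᵀ * P - Pᵀ * B).PosSemidef ↔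
      ∃ Υ Ξ : Matrix (Fin n) (Fin n) ℝ,
        (Matrix.fromBlocks (M - Bᵀ * Υ - Υᵀ * B) (Υᵀ - Pᵀ - Bᵀ * Ξ)
          (Υ - P - Ξᵀ * B) (Ξ + Ξᵀ)).PosSemidef := by
  have hsym : (M - Bᵀ * P - Pᵀ * B).IsHermitian := by
    unfold Matrix.IsHermitian
    simp only [conjTranspose_eq_transpose_of_trivial, transpose_sub, transpose_mul,
      transpose_transpose, hM.eq]
    rw [sub_sub, sub_sub, add_comm]
  constructor
  · intro h
    refine ⟨P, 0, ?_⟩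
    simp only [Matrix.mul_zero, Matrix.zero_mul, transpose_zero, sub_zero, sub_self, add_zero]
    refine Matrix.PosSemidef.of_dotProduct_mulVec_nonneg ?_ ?_
    · exact Matrix.IsHermitian.fromBlocks h.1 (by simp) Matrix.isHermitian_zero
    · intro x
      have := h.dotProduct_mulVec_nonneg (x ∘ Sum.inl)
      simpa [dotProduct_block, mulVec_sub, fromBlocks_mulVec] using this
  · rintro ⟨Υ, Ξ, h⟩
    refine Matrix.PosSemidef.of_dotProduct_mulVec_nonneg hsym fun x => ?_
    have key : ∀ (A : Matrix (Fin n) (Fin n) ℝ) (v w : Fin n → ℝ),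
        v ⬝ᵥ Aᵀ *ᵥ w = w ⬝ᵥ A *ᵥ v := by
      intro A v w
      rw [dotProduct_mulVec, vecMul_transpose, dotProduct_comm]
    have h2 := h.dotProduct_mulVec_nonneg (Sum.elim x (B *ᵥ x))
    simp only [star_trivial, fromBlocks_mulVec, sumElim_dotProduct_sumElim,
      Sum.elim_comp_inl, Sum.elim_comp_inr,
      Matrix.sub_mulVec, Matrix.add_mulVec, Matrix.mulVec_sub, ← Matrix.mulVec_mulVec,
      dotProduct_sub, dotProduct_add, sub_dotProduct, add_dotProduct, key] at h2 ⊢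
    linarith [dotProduct_comm (Υ *ᵥ x) (B *ᵥ x), dotProduct_comm (Ξ *ᵥ (B *ᵥ x)) (B *ᵥ x),
      dotProduct_comm (P *ᵥ x) (B *ᵥ x)]
end

section
/- Let P, B_k ∈ ℝ^{n×n} with P positive definite, Λ ∈ ℝ^{n×n} positive definite diagonal, ρ_k > 0, σ_k > 0, and ε > 0. Suppose the block matrix G_k = [[Λ − (σ_k+ε)I_n − B_kᵀP − PB_k, ρ_k P], [ρ_k P, σ_k I_n]] is positive definite. Then for every matrix Φ ∈ ℝ^{n×n} with ‖Φ‖ ≤ 1 (operator norm), setting B = B_k + ρ_k Φ, one has Λ − BᵀP − PB ⪰ ε I_n. -/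
open Matrix

theorem stmt7 {n : ℕ} (P Bk Φ : Matrix (Fin n) (Fin n) ℝ) (hP : P.PosDef)
    (d : Fin n → ℝ) (hd : ∀ i, 0 < d i)
    (ρ σ ε : ℝ) (hρ : 0 < ρ) (hσ : 0 < σ) (hε : 0 < ε)
    (hG : (Matrix.fromBlocks
        (Matrix.diagonal d - (σ + ε) • (1 : Matrix (Fin n) (Fin n) ℝ)
          - Bkᵀ * P - P * Bk)
        (ρ • P) ((ρ • P)ᵀ) (σ • (1 : Matrix (Fin n) (Fin n) ℝ))).PosDef)
    (hΦ : ∀ x : Fin n → ℝ, ∑ i, (Φ.mulVec x i) ^ 2 ≤ ∑ i, (x i) ^ 2) :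
    (Matrix.diagonal d - (Bk + ρ • Φ)ᵀ * P - P * (Bk + ρ • Φ)
      - ε • (1 : Matrix (Fin n) (Fin n) ℝ)).PosSemidef := by
  have hPsymm : Pᵀ = P := hP.1
  rw [posSemidef_iff_dotProduct_mulVec]
  constructor
  · show _ᴴ = _
    have hPh : Pᴴ = P := hP.1
    simp only [transpose_sub, transpose_mul, transpose_smul, transpose_one, diagonal_transpose, conjTranspose_sub, conjTranspose_mul, conjTranspose_smul, conjTranspose_one,
      conjTranspose_eq_transpose_of_trivial, transpose_transpose, hPsymm, diagonal_conjTranspose, star_trivial, RingHom.id_apply,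
      Pi.star_def]
    abel
  · intro x
    have hx := (hG.posSemidef).dotProduct_mulVec_nonneg (Sum.elim x (-(Φ *ᵥ x)))
    have hy := hΦ x
    set y := Φ *ᵥ x with hydef
    have hyy : y ⬝ᵥ y ≤ x ⬝ᵥ x := by
      simpa [dotProduct, pow_two] using hy
    -- expand hx
    simp only [fromBlocks_mulVec, Sum.elim_comp_inl, Sum.elim_comp_inr, star_trivial,
      sumElim_dotProduct_sumElim, dotProduct_add, mulVec_smul, sub_mulVec, add_mulVec,
      smul_mulVec, one_mulVec, dotProduct_smul, dotProduct_neg, neg_dotProduct,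
      mulVec_neg, smul_eq_mul, dotProduct_sub, dotProduct_smul, smul_dotProduct, transpose_smul, transpose_transpose, hPsymm] at hx
    -- expand goal
    simp only [star_trivial, sub_mulVec, add_mulVec, smul_mulVec, one_mulVec,
      transpose_add, transpose_smul, Matrix.add_mul, Matrix.mul_add, Matrix.smul_mul,
      Matrix.mul_smul, dotProduct_sub, dotProduct_add, dotProduct_smul, smul_eq_mul,
      mulVec_smul]
    -- relate xᵀ Φᵀ P x with y ⬝ᵥ P x
    have h1 : x ⬝ᵥ (Φᵀ * P) *ᵥ x = y ⬝ᵥ P *ᵥ x := by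
      rw [← mulVec_mulVec, dotProduct_mulVec, vecMul_transpose]
    have h2 : x ⬝ᵥ (P * Φ) *ᵥ x = x ⬝ᵥ P *ᵥ y := by
      rw [← mulVec_mulVec]
    have h3 : y ⬝ᵥ P *ᵥ x = x ⬝ᵥ P *ᵥ y := by
      rw [dotProduct_mulVec, dotProduct_comm, ← mulVec_transpose, hPsymm]
    rw [h1, h2]
    nlinarith [hx, hyy, hσ, mul_le_mul_of_nonneg_left hyy hσ.le]
end
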